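/- There exists a constant c = c(n) such that for every A ∈ ℝ^{n×n}, |sym(A) − Id| ≤ c · dist(A, SO(n)) + c · |A − Id|², where sym(A) = (A + Aᵀ)/2. -/

import Mathlib

open MeasureTheory Matrix
open scoped RealInnerProductSpace ENNReal
noncomputable section

/-- `ℝⁿ` as a Euclidean space. -/
abbrev En (n : ℕ) := EuclideanSpace ℝ (Fin n)

/-- The gradient matrix `(Du)_{ij} = ∂u_i/∂x_j` of `u : ℝⁿ → ℝⁿ`. -/
def Dmat {n : ℕ} (u : En n → En n) (x : En n) : Matrix (Fin n) (Fin n) ℝ :=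
  Matrix.of fun i j => fderiv ℝ u x (EuclideanSpace.single j 1) i

/-- Frobenius (Euclidean) norm of a matrix. -/
def frobNorm {n : ℕ} (A : Matrix (Fin n) (Fin n) ℝ) : ℝ :=
  Real.sqrt (∑ i, ∑ j, (A i j) ^ 2)

/-- The special orthogonal group `SO(n)` as a set of matrices. -/
def SOn (n : ℕ) : Set (Matrix (Fin n) (Fin n) ℝ) := {Q | Qᵀ * Q = 1 ∧ Q.det = 1}

/-- Frobenius distance of a matrix to `SO(n)`. -/
def distSO {n : ℕ} (A : Matrix (Fin n) (Fin n) ℝ) : ℝ :=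
  sInf ((fun Q => frobNorm (A - Q)) '' SOn n)

/-- Symmetric part `(A + Aᵀ)/2` of a matrix. -/
def symMat {n : ℕ} (A : Matrix (Fin n) (Fin n) ℝ) : Matrix (Fin n) (Fin n) ℝ :=
  (1 / 2 : ℝ) • (A + Aᵀ)

/-- A set has Lipschitz boundary: near every boundary point, after choosing a unit
normal direction `e`, the set coincides with the subgraph of a Lipschitz function. -/
def HasLipschitzBoundary {n : ℕ} (Ω : Set (En n)) : Prop :=
  ∀ x ∈ frontier Ω, ∃ r > (0 : ℝ), ∃ e : En n, ‖e‖ = 1 ∧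
    ∃ L : NNReal, ∃ φ : En n → ℝ, LipschitzWith L φ ∧
      ∀ y ∈ Metric.ball x r, (y ∈ Ω ↔ ⟪y - x, e⟫ < φ (y - x - ⟪y - x, e⟫ • e))

/-- `u ∈ W^{1,1}(Ω; ℝⁿ)`, encoded by differentiability on `Ω` together with
integrability of the gradient on `Ω`. -/
def W11 {n : ℕ} (Ω : Set (En n)) (u : En n → En n) : Prop :=
  (∀ x ∈ Ω, DifferentiableAt ℝ u x) ∧
    MemLp (fun x => frobNorm (Dmat u x)) 1 (volume.restrict Ω)

/-- A matrix field is a.e.-measurable (entrywise). -/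
def AEMeasMat {n : ℕ} (A : En n → Matrix (Fin n) (Fin n) ℝ)
    (μ : MeasureTheory.Measure (En n)) : Prop :=
  ∀ i j, AEMeasurable (fun x => A x i j) μ

section Aux

attribute [local instance] Matrix.frobeniusSeminormedAddCommGroup
  Matrix.frobeniusNormedAddCommGroup Matrix.frobeniusNormedRing Matrix.frobeniusNormedSpace

lemma frobNorm_eq {n : ℕ} (A : Matrix (Fin n) (Fin n) ℝ) : frobNorm A = ‖A‖ := by
  rw [Matrix.frobenius_norm_def, frobNorm, Real.sqrt_eq_rpow]
  congr 1
  refine Finset.sum_congr rfl fun i _ => Finset.sum_congr rfl fun j _ => ?_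
  rw [Real.norm_eq_abs, Real.rpow_two, sq_abs]

lemma norm_orth {n : ℕ} {Q : Matrix (Fin n) (Fin n) ℝ} (hQ : Qᵀ * Q = 1) :
    ‖Q‖ = Real.sqrt n := by
  rw [← frobNorm_eq, frobNorm]
  congr 1
  have := congrArg Matrix.trace hQ
  rw [Matrix.trace_one] at this
  rw [Matrix.trace] at this
  simp only [Matrix.diag, Matrix.mul_apply, Matrix.transpose_apply] at this
  rw [Finset.sum_comm]
  simpa [sq] using this

/-- Per-rotation bound: `‖sym A − 1‖ ≤ ‖A − Q‖ + ½‖Q − 1‖²`. -/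
lemma symMat_bound {n : ℕ} (A : Matrix (Fin n) (Fin n) ℝ)
    {Q : Matrix (Fin n) (Fin n) ℝ} (hQ : Qᵀ * Q = 1) :
    ‖symMat A - 1‖ ≤ ‖A - Q‖ + (1/2) * ‖Q - 1‖ ^ 2 := by
  have key : symMat A - 1 =
      (1/2 : ℝ) • ((A - Q) + (A - Q)ᵀ) - (1/2 : ℝ) • ((Qᵀ - 1) * (Q - 1)) := by
    simp only [symMat, Matrix.transpose_sub, Matrix.sub_mul, Matrix.mul_sub,
      Matrix.one_mul, Matrix.mul_one, hQ]
    module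
  calc ‖symMat A - 1‖
      ≤ ‖(1/2 : ℝ) • ((A - Q) + (A - Q)ᵀ)‖ + ‖(1/2 : ℝ) • ((Qᵀ - 1) * (Q - 1))‖ := by
        rw [key]; exact norm_sub_le _ _
    _ ≤ ‖A - Q‖ + (1/2) * ‖Q - 1‖ ^ 2 := by
        gcongr
        · rw [norm_smul]
          have : ‖(A - Q) + (A - Q)ᵀ‖ ≤ ‖A - Q‖ + ‖A - Q‖ := by
            calc ‖(A - Q) + (A - Q)ᵀ‖ ≤ ‖A - Q‖ + ‖(A - Q)ᵀ‖ := norm_add_le _ _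
              _ = ‖A - Q‖ + ‖A - Q‖ := by rw [Matrix.frobenius_norm_transpose]
          calc ‖(1/2 : ℝ)‖ * ‖(A - Q) + (A - Q)ᵀ‖
              ≤ (1/2) * (‖A - Q‖ + ‖A - Q‖) := by
                rw [show ‖(1/2 : ℝ)‖ = 1/2 by norm_num]; gcongr
            _ = ‖A - Q‖ := by ring
        · rw [norm_smul, show ‖(1/2 : ℝ)‖ = 1/2 by norm_num]
          gcongr
          calc ‖(Qᵀ - 1) * (Q - 1)‖ ≤ ‖Qᵀ - 1‖ * ‖Q - 1‖ := norm_mul_le _ _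
            _ = ‖Q - 1‖ ^ 2 := by
                rw [show Qᵀ - 1 = (Q - 1)ᵀ by simp [Matrix.transpose_sub],
                  Matrix.frobenius_norm_transpose, sq]

lemma perQ {n : ℕ} (A : Matrix (Fin n) (Fin n) ℝ)
    {Q : Matrix (Fin n) (Fin n) ℝ} (hQ : Qᵀ * Q = 1) :
    ‖symMat A - 1‖ ≤ (2 + 2 * Real.sqrt n) * ‖A - Q‖
      + (2 + 2 * Real.sqrt n) * ‖A - 1‖ ^ 2 := by
  have hs : (0:ℝ) ≤ Real.sqrt n := Real.sqrt_nonneg _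
  have hd : (0:ℝ) ≤ ‖A - Q‖ := norm_nonneg _
  have ha : (0:ℝ) ≤ ‖A - 1‖ := norm_nonneg _
  have hq : (0:ℝ) ≤ ‖Q - 1‖ := norm_nonneg _
  have htri : ‖Q - 1‖ ≤ ‖A - Q‖ + ‖A - 1‖ := by
    calc ‖Q - 1‖ = ‖(A - 1) - (A - Q)‖ := by congr 1; abel
      _ ≤ ‖A - 1‖ + ‖A - Q‖ := norm_sub_le _ _
      _ = ‖A - Q‖ + ‖A - 1‖ := by ring
  have hQn : ‖Q - 1‖ ≤ 2 * Real.sqrt n := by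
    calc ‖Q - 1‖ ≤ ‖Q‖ + ‖(1 : Matrix (Fin n) (Fin n) ℝ)‖ := norm_sub_le _ _
      _ = 2 * Real.sqrt n := by
          rw [norm_orth hQ, norm_orth (by simp : (1 : Matrix (Fin n) (Fin n) ℝ)ᵀ * 1 = 1)]
          ring
  have hmain := symMat_bound A hQ
  rcases le_or_gt ‖Q - 1‖ (2 * ‖A - 1‖) with h | h
  · have : (1/2) * ‖Q - 1‖ ^ 2 ≤ 2 * ‖A - 1‖ ^ 2 := by nlinarith
    nlinarith
  · have hd2 : ‖Q - 1‖ ≤ 2 * ‖A - Q‖ := by linarith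
    have : (1/2) * ‖Q - 1‖ ^ 2 ≤ 2 * Real.sqrt n * ‖A - Q‖ := by nlinarith
    nlinarith

end Aux

/-- Taylor expansion of the distance to `SO(n)` at the identity. -/
theorem sym_sub_id_le_distSO (n : ℕ) :
    ∃ c : ℝ, 0 < c ∧ ∀ A : Matrix (Fin n) (Fin n) ℝ,
      frobNorm (symMat A - 1) ≤ c * distSO A + c * (frobNorm (A - 1)) ^ 2 := by
  set c : ℝ := 2 + 2 * Real.sqrt n with hc
  have hcpos : 0 < c := by positivity
  refine ⟨c, hcpos, fun A => ?_⟩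
  letI := Matrix.frobeniusNormedAddCommGroup (α := ℝ) (m := Fin n) (n := Fin n)
  have hone : (1 : Matrix (Fin n) (Fin n) ℝ) ∈ SOn n := ⟨by simp, by simp⟩
  have hne : ((fun Q => frobNorm (A - Q)) '' SOn n).Nonempty := ⟨_, 1, hone, rfl⟩
  have hlb : (frobNorm (symMat A - 1) - c * (frobNorm (A - 1)) ^ 2) / c ≤ distSO A := by
    refine le_csInf hne ?_
    rintro b ⟨Q, hQ, rfl⟩
    rw [div_le_iff₀ hcpos]
    have := perQ A hQ.1
    rw [← frobNorm_eq, ← frobNorm_eq, ← frobNorm_eq] at this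
    simp only [hc] at *
    nlinarith [this]
  rw [div_le_iff₀ hcpos] at hlb
  nlinarith [hlb]
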